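/- Let m and n be coprime positive integers and let q be a positive integer. Then c_{m·n}(q) = ∑_{d ∣ gcd(m,q)} d · c_n(q/d) · μ(m/d), where the sum runs over all positive divisors d of gcd(m,q). -/

import Mathlib

open ArithmeticFunction
open scoped ArithmeticFunction.Moebius ArithmeticFunction.zeta

/-- The Ramanujan sum `c_n(q)`, the sum of the `q`-th powers of the primitive
`n`-th roots of unity. -/
noncomputable def ramanujanSum (n q : ℕ) : ℂ :=
  ∑ k ∈ (Finset.Icc 1 n).filter (fun k => Nat.gcd k n = 1),
    Complex.exp (2 * Real.pi * Complex.I * k * q / n)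

private lemma sum_mu_int (n : ℕ) : ∑ d ∈ n.divisors, (μ d : ℤ) = if n = 1 then 1 else 0 := by
  have h : (μ * ζ : ArithmeticFunction ℤ) n = (1 : ArithmeticFunction ℤ) n := by
    rw [moebius_mul_coe_zeta]
  rwa [coe_mul_zeta_apply, one_apply] at h

private lemma sum_exp_eq (N q : ℕ) (hN : 0 < N) :
    ∑ j ∈ Finset.Icc 1 N, Complex.exp (2 * Real.pi * Complex.I * j * q / N) =
      if N ∣ q then (N : ℂ) else 0 := by
  have hN0 : (N : ℂ) ≠ 0 := Nat.cast_ne_zero.mpr hN.ne'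
  set x : ℂ := Complex.exp (2 * Real.pi * Complex.I * q / N) with hx
  have hterm : ∀ j : ℕ, Complex.exp (2 * Real.pi * Complex.I * j * q / N) = x ^ j := by
    intro j
    rw [hx, ← Complex.exp_nat_mul]
    ring_nf
  have hxN : x ^ N = 1 := by
    rw [hx, ← Complex.exp_nat_mul]
    have harg : (N : ℂ) * (2 * Real.pi * Complex.I * q / N) = q * (2 * Real.pi * Complex.I) := by
      field_simp
    rw [harg, Complex.exp_nat_mul_two_pi_mul_I]
  simp_rw [hterm]
  by_cases hdvd : N ∣ q
  · obtain ⟨c, rfl⟩ := hdvd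
    have hx1 : x = 1 := by
      rw [hx]
      have harg : 2 * Real.pi * Complex.I * (((N * c : ℕ) : ℂ)) / N
          = (c : ℕ) * (2 * Real.pi * Complex.I) := by
        push_cast
        field_simp
      rw [harg, Complex.exp_nat_mul_two_pi_mul_I]
    simp [hx1]
  · have hx1 : x ≠ 1 := by
      intro h1
      rw [hx, Complex.exp_eq_one_iff] at h1
      obtain ⟨k, hk⟩ := h1
      apply hdvd
      have hqc : (q : ℂ) = k * N := by
        have h2 : (2 * Real.pi * Complex.I : ℂ) ≠ 0 := by
          simp [Real.pi_ne_zero, Complex.I_ne_zero]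
        field_simp at hk
        have h3 : (q : ℂ) * (2 * Real.pi * Complex.I) = (k : ℂ) * N * (2 * Real.pi * Complex.I) := by
          linear_combination (2 * Real.pi * Complex.I) * hk
        exact mul_right_cancel₀ h2 h3
      have hqz : (q : ℤ) = k * N := by exact_mod_cast hqc
      have : (N : ℤ) ∣ (q : ℤ) := ⟨k, by linarith⟩
      exact_mod_cast this
    rw [if_neg hdvd]
    have hIcc : Finset.Icc 1 N = Finset.Ico 1 (N + 1) := by
      rw [Finset.Ico_add_one_right_eq_Icc]
    rw [hIcc, geom_sum_Ico hx1 (by omega), pow_succ, hxN, one_mul]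
    simp

private lemma ramanujanSum_eq_sum (n q : ℕ) (hn : 0 < n) :
    ramanujanSum n q = ∑ e ∈ (Nat.gcd n q).divisors, (e : ℂ) * (μ (n / e) : ℤ) := by
  have hn0 : n ≠ 0 := hn.ne'
  rw [ramanujanSum, Finset.sum_filter]
  have step1 : ∀ k ∈ Finset.Icc 1 n,
      (if Nat.gcd k n = 1 then Complex.exp (2 * Real.pi * Complex.I * k * q / n) else 0)
        = ∑ d ∈ n.divisors, (if d ∣ k then
            (μ d : ℂ) * Complex.exp (2 * Real.pi * Complex.I * k * q / n) else 0) := by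
    intro k hk
    rw [← Finset.sum_filter]
    have hfe : {d ∈ n.divisors | d ∣ k} = (Nat.gcd k n).divisors := by
      have h1 : {d ∈ n.divisors | d ∣ Nat.gcd k n} = (Nat.gcd k n).divisors :=
        Nat.divisors_filter_dvd_of_dvd hn0 (Nat.gcd_dvd_right k n)
      rw [← h1]
      apply Finset.filter_congr
      intro d hd
      simp only [Nat.mem_divisors] at hd
      constructor
      · intro hdk; exact Nat.dvd_gcd hdk hd.1
      · intro hdg; exact hdg.trans (Nat.gcd_dvd_left k n)
    rw [hfe, ← Finset.sum_mul]
    have : (∑ d ∈ (Nat.gcd k n).divisors, (μ d : ℂ))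
        = if Nat.gcd k n = 1 then 1 else 0 := by
      have := sum_mu_int (Nat.gcd k n)
      have hcast : ((∑ d ∈ (Nat.gcd k n).divisors, (μ d : ℤ) : ℤ) : ℂ)
          = ∑ d ∈ (Nat.gcd k n).divisors, (μ d : ℂ) := by push_cast; rfl
      rw [← hcast, this]
      split <;> simp
    rw [this]
    split <;> simp
  rw [Finset.sum_congr rfl step1, Finset.sum_comm]
  have step2 : ∀ d ∈ n.divisors,
      (∑ k ∈ Finset.Icc 1 n, if d ∣ k then
          (μ d : ℂ) * Complex.exp (2 * Real.pi * Complex.I * k * q / n) else 0)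
        = (μ d : ℂ) * (if (n / d) ∣ q then ((n / d : ℕ) : ℂ) else 0) := by
    intro d hd
    obtain ⟨hdn, -⟩ := Nat.mem_divisors.mp hd
    have hd0 : 0 < d := Nat.pos_of_dvd_of_pos hdn hn
    have hnd0 : 0 < n / d := Nat.div_pos (Nat.le_of_dvd hn hdn) hd0
    rw [← Finset.sum_filter, ← Finset.mul_sum]
    congr 1
    rw [← sum_exp_eq (n / d) q hnd0]
    apply Finset.sum_nbij' (fun k => k / d) (fun j => d * j)
    · intro k hk
      simp only [Finset.mem_filter, Finset.mem_Icc] at hk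
      obtain ⟨⟨hk1, hkn⟩, hdk⟩ := hk
      simp only [Finset.mem_Icc]
      exact ⟨Nat.one_le_div_iff hd0 |>.mpr (Nat.le_of_dvd hk1 hdk),
        Nat.div_le_div_right hkn⟩
    · intro j hj
      simp only [Finset.mem_Icc] at hj
      simp only [Finset.mem_filter, Finset.mem_Icc]
      refine ⟨⟨Nat.mul_pos hd0 hj.1, ?_⟩, Dvd.intro j rfl⟩
      calc d * j ≤ d * (n / d) := Nat.mul_le_mul_left d hj.2
        _ = n := Nat.mul_div_cancel' hdn
    · intro k hk
      simp only [Finset.mem_filter] at hk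
      exact Nat.mul_div_cancel' hk.2
    · intro j _
      exact Nat.mul_div_cancel_left j hd0
    · intro k hk
      simp only [Finset.mem_filter, Finset.mem_Icc] at hk
      obtain ⟨⟨hk1, hkn⟩, hdk⟩ := hk
      congr 1
      have hkd : ((k / d : ℕ) : ℂ) * d = (k : ℂ) := by
        rw [← Nat.cast_mul, Nat.div_mul_cancel hdk]
      have hnd : ((n / d : ℕ) : ℂ) * d = (n : ℂ) := by
        rw [← Nat.cast_mul, Nat.div_mul_cancel hdn]
      have hd0' : (d : ℂ) ≠ 0 := Nat.cast_ne_zero.mpr hd0.ne'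
      have hnd0' : ((n / d : ℕ) : ℂ) ≠ 0 := Nat.cast_ne_zero.mpr hnd0.ne'
      rw [← hkd, ← hnd]
      field_simp
  rw [Finset.sum_congr rfl step2]
  have step3 : ∀ d ∈ n.divisors,
      (μ d : ℂ) * (if (n / d) ∣ q then ((n / d : ℕ) : ℂ) else 0)
        = (fun e => (μ (n / e) : ℂ) * (if e ∣ q then ((e : ℕ) : ℂ) else 0)) (n / d) := by
    intro d hd
    obtain ⟨hdn, -⟩ := Nat.mem_divisors.mp hd
    simp only
    rw [Nat.div_div_self hdn hn0]
  have hdiv2 := Nat.sum_div_divisors (α := ℂ) n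
    (fun e => ((μ (n / e) : ℤ) : ℂ) * (if e ∣ q then ((e : ℕ) : ℂ) else 0))
  rw [Finset.sum_congr rfl step3, hdiv2]
  have step4 : (∑ e ∈ n.divisors, (μ (n / e) : ℂ) * (if e ∣ q then ((e : ℕ) : ℂ) else 0))
      = ∑ e ∈ {e ∈ n.divisors | e ∣ q}, (μ (n / e) : ℂ) * e := by
    rw [Finset.sum_filter]
    apply Finset.sum_congr rfl
    intro e _
    split <;> simp
  rw [step4]
  have hfe : {e ∈ n.divisors | e ∣ q} = (Nat.gcd n q).divisors := by
    have h1 : {e ∈ n.divisors | e ∣ Nat.gcd n q} = (Nat.gcd n q).divisors :=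
      Nat.divisors_filter_dvd_of_dvd hn0 (Nat.gcd_dvd_left n q)
    rw [← h1]
    apply Finset.filter_congr
    intro e he
    simp only [Nat.mem_divisors] at he
    constructor
    · intro heq; exact Nat.dvd_gcd he.1 heq
    · intro heg; exact heg.trans (Nat.gcd_dvd_right n q)
  rw [hfe]
  apply Finset.sum_congr rfl
  intro e _
  push_cast
  ring

theorem ramanujanSum_mul_eq_sum (m n : ℕ) (hm : 0 < m) (hn : 0 < n)
    (h : Nat.Coprime m n) (q : ℕ) (hq : 0 < q) :
    ramanujanSum (m * n) q =
      ∑ d ∈ (Nat.gcd m q).divisors,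
        (d : ℂ) * ramanujanSum n (q / d) * (moebius (m / d) : ℤ) := by
  set A := Nat.gcd m q with hA
  set B := Nat.gcd n q with hB
  have hAm : A ∣ m := Nat.gcd_dvd_left m q
  have hAq : A ∣ q := Nat.gcd_dvd_right m q
  have hBn : B ∣ n := Nat.gcd_dvd_left n q
  have hBq : B ∣ q := Nat.gcd_dvd_right n q
  have hA0 : 0 < A := Nat.pos_of_ne_zero fun h0 => hm.ne' (Nat.eq_zero_of_gcd_eq_zero_left h0)
  have hB0 : 0 < B := Nat.pos_of_ne_zero fun h0 => hn.ne' (Nat.eq_zero_of_gcd_eq_zero_left h0)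
  have hAB : Nat.Coprime A B :=
    Nat.Coprime.coprime_dvd_left hAm (Nat.Coprime.coprime_dvd_right hBn h)
  have hg : Nat.gcd (m * n) q = A * B := by
    apply Nat.dvd_antisymm
    · have h1 : Nat.gcd (m * n) q ∣
          Nat.gcd (Nat.gcd (m * n) q) m * Nat.gcd (Nat.gcd (m * n) q) n := by
        rw [Nat.dvd_gcd_mul_gcd_iff_dvd_mul]
        exact Nat.gcd_dvd_left _ _
      refine h1.trans (Nat.mul_dvd_mul ?_ ?_)
      · exact Nat.dvd_gcd (Nat.gcd_dvd_right _ m)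
          ((Nat.gcd_dvd_left _ m).trans (Nat.gcd_dvd_right (m * n) q))
      · exact Nat.dvd_gcd (Nat.gcd_dvd_right _ n)
          ((Nat.gcd_dvd_left _ n).trans (Nat.gcd_dvd_right (m * n) q))
    · exact Nat.dvd_gcd (Nat.mul_dvd_mul hAm hBn) (hAB.mul_dvd_of_dvd_of_dvd hAq hBq)
  rw [ramanujanSum_eq_sum (m * n) q (Nat.mul_pos hm hn), hg]
  -- rewrite the right-hand side as a double sum
  have hrhs : ∀ d ∈ A.divisors,
      (d : ℂ) * ramanujanSum n (q / d) * ((μ (m / d) : ℤ) : ℂ)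
        = ∑ e ∈ B.divisors,
            ((d * e : ℕ) : ℂ) * ((μ (m / d) : ℤ) : ℂ) * ((μ (n / e) : ℤ) : ℂ) := by
    intro d hd
    obtain ⟨hdA, -⟩ := Nat.mem_divisors.mp hd
    have hdq : d ∣ q := hdA.trans hAq
    have hdn : Nat.Coprime d n := Nat.Coprime.coprime_dvd_left (hdA.trans hAm) h
    have hgnd : Nat.gcd n (q / d) = B := by
      have h1 : Nat.gcd n (d * (q / d)) = Nat.gcd n (q / d) :=
        Nat.Coprime.gcd_mul_left_cancel_right (q / d) hdn
      rw [← h1, Nat.mul_div_cancel' hdq]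
    rw [ramanujanSum_eq_sum n (q / d) hn, hgnd, Finset.mul_sum, Finset.sum_mul]
    apply Finset.sum_congr rfl
    intro e _
    push_cast
    ring
  rw [Finset.sum_congr rfl hrhs, ← Finset.sum_product']
  apply Finset.sum_nbij' (fun f => (Nat.gcd f A, Nat.gcd f B)) (fun p => p.1 * p.2)
  · intro f hf
    obtain ⟨-, hAB0⟩ := Nat.mem_divisors.mp hf
    simp only [Finset.mem_product, Nat.mem_divisors]
    exact ⟨⟨Nat.gcd_dvd_right f A, hA0.ne'⟩, ⟨Nat.gcd_dvd_right f B, hB0.ne'⟩⟩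
  · rintro ⟨d, e⟩ hp
    simp only [Finset.mem_product, Nat.mem_divisors] at hp
    exact Nat.mem_divisors.mpr
      ⟨Nat.mul_dvd_mul hp.1.1 hp.2.1, (Nat.mul_pos hA0 hB0).ne'⟩
  · intro f hf
    obtain ⟨hfAB, -⟩ := Nat.mem_divisors.mp hf
    exact (Nat.gcd_mul_gcd_eq_iff_dvd_mul_of_coprime hAB).mpr hfAB
  · rintro ⟨d, e⟩ hp
    simp only [Finset.mem_product, Nat.mem_divisors] at hp
    obtain ⟨⟨hdA, -⟩, ⟨heB, -⟩⟩ := hp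
    have heA : Nat.Coprime e A := Nat.Coprime.coprime_dvd_left heB hAB.symm
    have hdB : Nat.Coprime d B := Nat.Coprime.coprime_dvd_left hdA hAB
    have h1 : Nat.gcd (d * e) A = d := by
      rw [Nat.Coprime.gcd_mul_right_cancel d heA, Nat.gcd_eq_left hdA]
    have h2 : Nat.gcd (d * e) B = e := by
      rw [Nat.Coprime.gcd_mul_left_cancel e hdB, Nat.gcd_eq_left heB]
    simp [h1, h2]
  · intro f hf
    obtain ⟨hfAB, -⟩ := Nat.mem_divisors.mp hf
    set d := Nat.gcd f A with hd
    set e := Nat.gcd f B with he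
    have hde : d * e = f := (Nat.gcd_mul_gcd_eq_iff_dvd_mul_of_coprime hAB).mpr hfAB
    have hdm : d ∣ m := (Nat.gcd_dvd_right f A).trans hAm
    have hen : e ∣ n := (Nat.gcd_dvd_right f B).trans hBn
    have hdiv : m * n / f = (m / d) * (n / e) := by
      rw [← hde, ← Nat.div_mul_div_comm hdm hen]
    have hcop : Nat.Coprime (m / d) (n / e) :=
      Nat.Coprime.coprime_dvd_left (Nat.div_dvd_of_dvd hdm)
        (Nat.Coprime.coprime_dvd_right (Nat.div_dvd_of_dvd hen) h)
    have hmu : μ (m * n / f) = μ (m / d) * μ (n / e) := by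
      rw [hdiv, isMultiplicative_moebius.map_mul_of_coprime hcop]
    simp only
    rw [hmu, ← hde]
    push_cast
    ring
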